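/- Let 1 ≤ p < ∞, let X₁, …, Xₙ, Y be real Banach spaces, let T : X₁ × ⋯ × Xₙ → Y be a continuous n-linear operator, and let c ≥ 0. Then T is Lipschitz p-summing with constant c if and only if there exists a Borel probability measure μ on the closed unit ball B of the space of continuous n-linear forms on X₁ × ⋯ × Xₙ, equipped with the topology of pointwise convergence (the weak-* topology), such that for all u, v ∈ X₁ × ⋯ × Xₙ one has ‖T(u) − T(v)‖ ≤ c · ( ∫_B |φ(u) − φ(v)|^p dμ(φ) )^{1/p}. -/

import Mathlib

open scoped BigOperators
open MeasureTheory

/-- `T` is Lipschitz `p`-summing with constant `c`. -/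
def LipschitzPSumming {n : ℕ} {X : Fin n → Type*} [∀ i, NormedAddCommGroup (X i)]
    [∀ i, NormedSpace ℝ (X i)] {Y : Type*} [NormedAddCommGroup Y] [NormedSpace ℝ Y]
    (p c : ℝ) (T : ContinuousMultilinearMap ℝ X Y) : Prop :=
  ∀ (k : ℕ) (u v : Fin k → ((i : Fin n) → X i)),
    (∑ i, ‖T (u i) - T (v i)‖ ^ p) ^ (1 / p) ≤
      c * ⨆ φ : {φ : ContinuousMultilinearMap ℝ X ℝ // ‖φ‖ ≤ 1},
        (∑ i, |φ.1 (u i) - φ.1 (v i)| ^ p) ^ (1 / p)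

/-- The closed unit ball of continuous `n`-linear forms on `X₁ × ⋯ × Xₙ`. -/
def FormBall {n : ℕ} (X : Fin n → Type*) [∀ i, NormedAddCommGroup (X i)]
    [∀ i, NormedSpace ℝ (X i)] : Type _ :=
  {φ : ContinuousMultilinearMap ℝ X ℝ // ‖φ‖ ≤ 1}

/-- The topology of pointwise convergence (weak-* topology) on the unit ball of
continuous `n`-linear forms. -/
instance FormBall.topologicalSpace {n : ℕ} (X : Fin n → Type*)
    [∀ i, NormedAddCommGroup (X i)] [∀ i, NormedSpace ℝ (X i)] :
    TopologicalSpace (FormBall X) :=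
  TopologicalSpace.induced
    (fun (φ : FormBall X) (x : (i : Fin n) → X i) => φ.1 x) Pi.topologicalSpace

/-- The Borel σ-algebra of the topology of pointwise convergence. -/
instance FormBall.measurableSpace {n : ℕ} (X : Fin n → Type*)
    [∀ i, NormedAddCommGroup (X i)] [∀ i, NormedSpace ℝ (X i)] :
    MeasurableSpace (FormBall X) :=
  borel (FormBall X)


namespace FormBall
variable {n : ℕ} {X : Fin n → Type*} [∀ i, NormedAddCommGroup (X i)] [∀ i, NormedSpace ℝ (X i)]

instance : BorelSpace (FormBall X) := ⟨rfl⟩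

instance : Nonempty (FormBall X) := ⟨⟨0, by simp⟩⟩

/-- The evaluation embedding. -/
def j : FormBall X → ((x : (i : Fin n) → X i) → ℝ) := fun φ x => φ.1 x

lemma isEmbedding_j : Topology.IsEmbedding (j (X := X)) := by
  refine ⟨⟨rfl⟩, ?_⟩
  intro φ ψ h
  exact Subtype.ext (ContinuousMultilinearMap.ext fun x => congrFun h x)

instance : T2Space (FormBall X) := isEmbedding_j.t2Space

lemma continuous_eval (x : (i : Fin n) → X i) :
    Continuous fun φ : FormBall X => φ.1 x :=
  (continuous_apply x).comp continuous_induced_dom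

lemma abs_eval_le (φ : FormBall X) (x : (i : Fin n) → X i) :
    |φ.1 x| ≤ ∏ i, ‖x i‖ := by
  calc |φ.1 x| = ‖φ.1 x‖ := rfl
    _ ≤ ‖φ.1‖ * ∏ i, ‖x i‖ := φ.1.le_opNorm x
    _ ≤ 1 * ∏ i, ‖x i‖ :=
        mul_le_mul_of_nonneg_right φ.2 (Finset.prod_nonneg fun i _ => norm_nonneg _)
    _ = ∏ i, ‖x i‖ := one_mul _

lemma range_j : Set.range (j (X := X)) =
    {F : ((x : (i : Fin n) → X i) → ℝ) |
      (∀ (x : (i : Fin n) → X i) (i : Fin n) (y z : X i),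
        F (Function.update x i (y + z)) = F (Function.update x i y) + F (Function.update x i z)) ∧
      (∀ (x : (i : Fin n) → X i) (i : Fin n) (a : ℝ) (y : X i),
        F (Function.update x i (a • y)) = a * F (Function.update x i y)) ∧
      (∀ x, |F x| ≤ ∏ i, ‖x i‖)} := by
  ext F
  constructor
  · rintro ⟨φ, rfl⟩
    refine ⟨fun x i y z => φ.1.map_update_add x i y z,
      fun x i a y => φ.1.map_update_smul x i a y, fun x => abs_eval_le φ x⟩
  · rintro ⟨h1, h2, h3⟩
    classical
    let f : MultilinearMap ℝ X ℝ :=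
      { toFun := F
        map_update_add' := fun {inst} x i y z => by
          rw [Subsingleton.elim inst (instDecidableEqFin n)]; exact h1 x i y z
        map_update_smul' := fun {inst} x i a y => by
          rw [Subsingleton.elim inst (instDecidableEqFin n), smul_eq_mul]; exact h2 x i a y }
    refine ⟨⟨f.mkContinuous 1 fun m => by rw [one_mul]; exact h3 m, ?_⟩, rfl⟩
    exact f.mkContinuous_norm_le zero_le_one _

lemma isCompact_range_j : IsCompact (Set.range (j (X := X))) := by
  have hsub : Set.range (j (X := X)) ⊆
      Set.univ.pi fun x : (i : Fin n) → X i => Set.Icc (-(∏ i, ‖x i‖)) (∏ i, ‖x i‖) := by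
    rintro F ⟨φ, rfl⟩ x _
    exact abs_le.mp (abs_eval_le φ x)
  have hcl : IsClosed (Set.range (j (X := X))) := by
    rw [range_j]
    simp only [Set.setOf_and, Set.setOf_forall]
    apply IsClosed.inter
    · exact isClosed_iInter fun x => isClosed_iInter fun i => isClosed_iInter fun y =>
        isClosed_iInter fun z => isClosed_eq (continuous_apply _)
          ((continuous_apply (Function.update x i y)).add (continuous_apply (Function.update x i z)))
    apply IsClosed.inter
    · exact isClosed_iInter fun x => isClosed_iInter fun i => isClosed_iInter fun a =>
        isClosed_iInter fun y => isClosed_eq (continuous_apply _)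
          (continuous_const.mul (continuous_apply (Function.update x i y)))
    · exact isClosed_iInter fun x => isClosed_le ((continuous_apply x).abs) continuous_const
  exact (isCompact_univ_pi fun x => isCompact_Icc).of_isClosed_subset hcl hsub

instance : CompactSpace (FormBall X) := by
  rw [← isCompact_univ_iff, isEmbedding_j.isCompact_iff, Set.image_univ]
  exact isCompact_range_j

end FormBall

open MeasureTheory Set
open scoped ENNReal NNReal
set_option linter.unusedSectionVars false
set_option maxHeartbeats 1000000

section RMK
variable {B : Type*} [TopologicalSpace B] [CompactSpace B] [T2Space B] [Nonempty B]
  [MeasurableSpace B] [BorelSpace B]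
variable (Λ : C(B, ℝ) →ₗ[ℝ] ℝ)

/-- The test set for the Riesz content. -/
def rmkTest (K : Set B) : Set ℝ :=
  {r | ∃ f : C(B, ℝ), (∀ x, 0 ≤ f x) ∧ (∀ x ∈ K, 1 ≤ f x) ∧ Λ f = r}

lemma rmkTest_nonempty (K : Set B) : (rmkTest Λ K).Nonempty :=
  ⟨Λ 1, 1, fun _ => zero_le_one, fun _ _ => le_refl _, rfl⟩

lemma rmk_mono (hpos : ∀ f : C(B, ℝ), (∀ x, 0 ≤ f x) → 0 ≤ Λ f)
    {f g : C(B, ℝ)} (h : ∀ x, f x ≤ g x) : Λ f ≤ Λ g := by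
  have := hpos (g - f) (fun x => by simpa using h x)
  rw [map_sub] at this; linarith

lemma rmkTest_bddBelow (hpos : ∀ f : C(B, ℝ), (∀ x, 0 ≤ f x) → 0 ≤ Λ f) (K : Set B) :
    ∀ r ∈ rmkTest Λ K, 0 ≤ r := by
  rintro r ⟨f, h0, _, rfl⟩
  exact hpos f h0

/-- The Riesz content of a set. -/
noncomputable def rmkCont (K : Set B) : ℝ := sInf (rmkTest Λ K)

variable (hpos : ∀ f : C(B, ℝ), (∀ x, 0 ≤ f x) → 0 ≤ Λ f)
include hpos

lemma rmkCont_nonneg (K : Set B) : 0 ≤ rmkCont Λ K :=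
  le_csInf (rmkTest_nonempty Λ K) (rmkTest_bddBelow Λ hpos K)

lemma rmkCont_le {K : Set B} {f : C(B, ℝ)} (h0 : ∀ x, 0 ≤ f x) (h1 : ∀ x ∈ K, 1 ≤ f x) :
    rmkCont Λ K ≤ Λ f :=
  csInf_le ⟨0, rmkTest_bddBelow Λ hpos K⟩ ⟨f, h0, h1, rfl⟩

lemma rmkCont_exists {K : Set B} {ε : ℝ} (hε : 0 < ε) :
    ∃ f : C(B, ℝ), (∀ x, 0 ≤ f x) ∧ (∀ x ∈ K, 1 ≤ f x) ∧ Λ f < rmkCont Λ K + ε := by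
  obtain ⟨r, ⟨f, h0, h1, rfl⟩, hr⟩ :=
    exists_lt_of_csInf_lt (rmkTest_nonempty Λ K) (lt_add_of_pos_right (rmkCont Λ K) hε)
  exact ⟨f, h0, h1, hr⟩

lemma rmkCont_mono {K₁ K₂ : Set B} (h : K₁ ⊆ K₂) : rmkCont Λ K₁ ≤ rmkCont Λ K₂ :=
  csInf_le_csInf ⟨0, rmkTest_bddBelow Λ hpos K₁⟩ (rmkTest_nonempty Λ K₂)
    (by rintro r ⟨f, h0, h1, rfl⟩; exact ⟨f, h0, fun x hx => h1 x (h hx), rfl⟩)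

lemma rmkCont_union_le (K₁ K₂ : Set B) :
    rmkCont Λ (K₁ ∪ K₂) ≤ rmkCont Λ K₁ + rmkCont Λ K₂ := by
  refine le_of_forall_pos_le_add fun ε hε => ?_
  obtain ⟨f₁, h10, h11, h1Λ⟩ := rmkCont_exists Λ hpos (K := K₁) (half_pos hε)
  obtain ⟨f₂, h20, h21, h2Λ⟩ := rmkCont_exists Λ hpos (K := K₂) (half_pos hε)
  have : rmkCont Λ (K₁ ∪ K₂) ≤ Λ (f₁ + f₂) := by
    have h0' : ∀ x, 0 ≤ (f₁ + f₂) x := fun x => by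
      simpa using add_nonneg (h10 x) (h20 x)
    have h1' : ∀ x ∈ K₁ ∪ K₂, 1 ≤ (f₁ + f₂) x := by
      rintro x (hx | hx)
      · simpa using le_add_of_le_of_nonneg (h11 x hx) (h20 x)
      · simpa using le_add_of_nonneg_of_le (h10 x) (h21 x hx)
    exact rmkCont_le Λ hpos h0' h1'
  rw [map_add] at this
  linarith

lemma rmkCont_union_disjoint {K₁ K₂ : Set B} (hK₁ : IsCompact K₁) (hK₂ : IsCompact K₂)
    (hd : Disjoint K₁ K₂) :
    rmkCont Λ (K₁ ∪ K₂) = rmkCont Λ K₁ + rmkCont Λ K₂ := by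
  refine le_antisymm (rmkCont_union_le Λ hpos K₁ K₂) ?_
  refine le_of_forall_pos_le_add fun ε hε => ?_
  obtain ⟨h, hh1, hh2, hh3⟩ :=
    exists_continuous_zero_one_of_isClosed hK₁.isClosed hK₂.isClosed hd
  obtain ⟨f, hf0, hf1, hfΛ⟩ := rmkCont_exists Λ hpos (K := K₁ ∪ K₂) hε
  have e1 : rmkCont Λ K₁ ≤ Λ (f * (1 - h)) := by
    have h0' : ∀ x, 0 ≤ (f * (1 - h)) x := fun x => by
      have := (hh3 x).2
      simp only [ContinuousMap.mul_apply, ContinuousMap.sub_apply, ContinuousMap.one_apply]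
      exact mul_nonneg (hf0 x) (by linarith)
    have h1' : ∀ x ∈ K₁, 1 ≤ (f * (1 - h)) x := fun x hx => by
      have hhx : h x = 0 := hh1 hx
      have : (1:ℝ) ≤ f x := hf1 x (Or.inl hx)
      simp only [ContinuousMap.mul_apply, ContinuousMap.sub_apply, ContinuousMap.one_apply, hhx]
      linarith
    exact rmkCont_le Λ hpos h0' h1'
  have e2 : rmkCont Λ K₂ ≤ Λ (f * h) := by
    have h0' : ∀ x, 0 ≤ (f * h) x := fun x => mul_nonneg (hf0 x) (hh3 x).1
    have h1' : ∀ x ∈ K₂, 1 ≤ (f * h) x := fun x hx => by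
      have hhx : h x = 1 := hh2 hx
      have : (1:ℝ) ≤ f x := hf1 x (Or.inr hx)
      simp only [ContinuousMap.mul_apply, hhx]
      linarith
    exact rmkCont_le Λ hpos h0' h1'
  have e3 : f * (1 - h) + f * h = f := by ext x; simp; ring
  have e4 := congrArg Λ e3
  rw [map_add] at e4
  linarith

/-- The Riesz content as a `Content`. -/
noncomputable def rmkContent : Content B where
  toFun K := Real.toNNReal (rmkCont Λ K)
  mono' K₁ K₂ h := Real.toNNReal_mono (rmkCont_mono Λ hpos h)
  sup_disjoint' K₁ K₂ hd _ _ := by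
    simp only [TopologicalSpace.Compacts.coe_sup]
    rw [rmkCont_union_disjoint Λ hpos K₁.isCompact K₂.isCompact hd,
      Real.toNNReal_add (rmkCont_nonneg Λ hpos _) (rmkCont_nonneg Λ hpos _)]
  sup_le' K₁ K₂ := by
    rw [← Real.toNNReal_add (rmkCont_nonneg Λ hpos _) (rmkCont_nonneg Λ hpos _)]
    refine Real.toNNReal_mono ?_
    have := rmkCont_union_le Λ hpos (K₁ : Set B) (K₂ : Set B)
    simpa [TopologicalSpace.Compacts.coe_sup] using this

lemma rmkCont_univ (hone : Λ 1 = 1) : rmkCont Λ (univ : Set B) = 1 := by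
  refine le_antisymm ?_ ?_
  · have h0' : ∀ x, 0 ≤ (1 : C(B, ℝ)) x := fun _ => zero_le_one
    have h1' : ∀ x ∈ (univ : Set B), 1 ≤ (1 : C(B, ℝ)) x := fun _ _ => le_refl _
    have := rmkCont_le Λ hpos h0' h1'
    rwa [hone] at this
  · refine le_csInf (rmkTest_nonempty Λ _) ?_
    rintro r ⟨f, h0, h1, rfl⟩
    have := rmk_mono Λ hpos (f := (1 : C(B, ℝ))) (g := f) (fun x => h1 x (mem_univ x))
    rwa [hone] at this

/-- The RMK measure. -/
noncomputable def rmkMeasure : Measure B := (rmkContent Λ hpos).measure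

lemma rmkMeasure_univ (hone : Λ 1 = 1) : rmkMeasure Λ hpos (univ : Set B) = 1 := by
  rw [rmkMeasure, Content.measure_apply _ MeasurableSet.univ]
  have h3 : (univ : Set B) = ((⟨univ, isOpen_univ⟩ : TopologicalSpace.Opens B) : Set B) := rfl
  rw [h3, Content.outerMeasure_opens]
  rw [(rmkContent Λ hpos).innerContent_of_isCompact isCompact_univ isOpen_univ]
  simp only [rmkContent, TopologicalSpace.Compacts.coe_mk]
  change ((rmkCont Λ (univ : Set B)).toNNReal : ℝ≥0∞) = 1
  rw [rmkCont_univ Λ hpos hone]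
  norm_num

lemma rmk_le_measure (hone : Λ 1 = 1) {g : C(B, ℝ)} {V : Set B} (hV : IsOpen V)
    (hg0 : ∀ x, 0 ≤ g x) (hg1 : ∀ x, g x ≤ 1) (hgV : tsupport g ⊆ V) :
    Λ g ≤ (rmkMeasure Λ hpos V).toReal := by
  have hKc : IsCompact (tsupport g) := (isClosed_tsupport _).isCompact
  have step1 : Λ g ≤ rmkCont Λ (tsupport g) := by
    refine le_csInf (rmkTest_nonempty Λ _) ?_
    rintro r ⟨f, h0, h1, rfl⟩
    refine rmk_mono Λ hpos fun x => ?_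
    by_cases hx : x ∈ tsupport g
    · exact le_trans (hg1 x) (h1 x hx)
    · rw [image_eq_zero_of_notMem_tsupport hx]; exact h0 x
  have step2 : ((rmkContent Λ hpos).toFun ⟨tsupport g, hKc⟩ : ℝ≥0∞) ≤ rmkMeasure Λ hpos V := by
    rw [rmkMeasure, Content.measure_apply _ hV.measurableSet]
    have h3 : V = ((⟨V, hV⟩ : TopologicalSpace.Opens B) : Set B) := rfl
    rw [h3, Content.outerMeasure_opens]
    exact Content.le_innerContent _ ⟨tsupport g, hKc⟩ ⟨V, hV⟩ hgV
  have hfin : rmkMeasure Λ hpos V ≠ ⊤ := by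
    have h4 := measure_mono (μ := rmkMeasure Λ hpos) (subset_univ V)
    rw [rmkMeasure_univ Λ hpos hone] at h4
    exact ne_top_of_le_ne_top ENNReal.one_ne_top h4
  have step3 := ENNReal.toReal_mono hfin step2
  rw [ENNReal.coe_toReal] at step3
  refine le_trans step1 (le_trans ?_ step3)
  simp only [rmkContent, TopologicalSpace.Compacts.coe_mk,
    Real.coe_toNNReal _ (rmkCont_nonneg Λ hpos _), le_refl]


lemma rmk_le_integral (hone : Λ 1 = 1) (f : C(B, ℝ)) (hf : ∀ x, 0 ≤ f x) :
    Λ f ≤ ∫ x, f x ∂(rmkMeasure Λ hpos) := by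
  set μ := rmkMeasure Λ hpos with hμ
  haveI hprob : IsProbabilityMeasure μ := ⟨rmkMeasure_univ Λ hpos hone⟩
  haveI houter : μ.OuterRegular := MeasureTheory.Content.outerRegular (rmkContent Λ hpos)
  have hint : Integrable (fun x => f x) μ := by
    have := BoundedContinuousFunction.integrable μ (BoundedContinuousFunction.mkOfCompact f)
    exact this
  have key : ∀ ε : ℝ, 0 < ε → ε ≤ 1 → Λ f ≤ (∫ x, f x ∂μ) + ε * (‖f‖ + 4) := by
    intro ε hε hε1
    set M := ‖f‖ with hMdef
    have hM0 : 0 ≤ M := norm_nonneg f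
    set m := ⌈M / ε⌉₊ with hmdef
    -- the slabs
    set E : Fin (m + 1) → Set B :=
      fun i => f ⁻¹' (Ioc ((i.val : ℝ) * ε - ε) ((i.val : ℝ) * ε)) with hEdef
    have hEmeas : ∀ i, MeasurableSet (E i) :=
      fun i => (map_continuous f).measurable measurableSet_Ioc
    have hEdis : Pairwise (Function.onFun Disjoint E) := by
      intro i j hij
      refine Set.disjoint_left.mpr fun x hxi hxj => ?_
      have h1 : f x ≤ (i.val : ℝ) * ε := hxi.2
      have h2 : ((j : ℕ) : ℝ) * ε - ε < f x := hxj.1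
      have h3 : f x ≤ ((j : ℕ) : ℝ) * ε := hxj.2
      have h4 : (i.val : ℝ) * ε - ε < f x := hxi.1
      have hji : (j : ℕ) ≤ (i : ℕ) := by
        by_contra hc
        push_neg at hc
        have : (i.val : ℝ) + 1 ≤ ((j : ℕ) : ℝ) := by exact_mod_cast hc
        nlinarith
      have hij' : (i : ℕ) ≤ (j : ℕ) := by
        by_contra hc
        push_neg at hc
        have : ((j : ℕ) : ℝ) + 1 ≤ (i.val : ℝ) := by exact_mod_cast hc
        nlinarith
      exact hij (Fin.ext (le_antisymm hij' hji))
    have hEcover : ⋃ i, E i = univ := by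
      ext x
      simp only [mem_iUnion, mem_univ, iff_true]
      have hx0 : 0 ≤ f x := hf x
      have hxM : f x ≤ M := le_trans (le_abs_self _) (f.norm_coe_le_norm x)
      have hkm : ⌈f x / ε⌉₊ ≤ m := Nat.ceil_le_ceil (by gcongr)
      refine ⟨⟨⌈f x / ε⌉₊, Nat.lt_succ_of_le hkm⟩, ?_, ?_⟩
      · have h2 : ((⌈f x / ε⌉₊ : ℕ) : ℝ) < f x / ε + 1 :=
          Nat.ceil_lt_add_one (div_nonneg hx0 hε.le)
        have h3 : ((⌈f x / ε⌉₊ : ℕ) : ℝ) * ε < (f x / ε + 1) * ε :=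
          mul_lt_mul_of_pos_right h2 hε
        have h4 : (f x / ε + 1) * ε = f x + ε := by field_simp
        simp only [Fin.val_mk]
        nlinarith
      · have h2 : f x / ε ≤ ((⌈f x / ε⌉₊ : ℕ) : ℝ) := Nat.le_ceil _
        have h3 : f x / ε * ε ≤ ((⌈f x / ε⌉₊ : ℕ) : ℝ) * ε :=
          mul_le_mul_of_nonneg_right h2 hε.le
        have h4 : f x / ε * ε = f x := by field_simp
        simp only [Fin.val_mk]
        linarith
    -- outer regular approximations
    have hδpos : (0 : ℝ) < ε / (m + 1) := by positivity
    have hexU : ∀ i : Fin (m + 1), ∃ U ⊇ E i, IsOpen U ∧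
        μ U < μ (E i) + ENNReal.ofReal (ε / (m + 1)) := by
      intro i
      exact Set.exists_isOpen_lt_of_lt (E i) _
        (ENNReal.lt_add_right (measure_ne_top μ _) (ENNReal.ofReal_pos.mpr hδpos).ne')
    choose U hUsub hUopen hUlt using hexU
    set V : Fin (m + 1) → Set B :=
      fun i => U i ∩ f ⁻¹' (Iio ((i.val : ℝ) * ε + ε)) with hVdef
    have hVopen : ∀ i, IsOpen (V i) :=
      fun i => (hUopen i).inter (isOpen_Iio.preimage (map_continuous f))
    have hEV : ∀ i, E i ⊆ V i := fun i x hx =>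
      ⟨hUsub i hx, by
        have : f x ≤ (i.val : ℝ) * ε := hx.2
        simp only [mem_preimage, mem_Iio]
        linarith⟩
    have hVle : ∀ i, μ (V i) ≤ μ (E i) + ENNReal.ofReal (ε / (m + 1)) :=
      fun i => le_trans (measure_mono inter_subset_left) (hUlt i).le
    -- partition of unity
    have hcover' : (univ : Set B) ⊆ ⋃ i, V i := by
      rw [← hEcover]; exact iUnion_mono hEV
    obtain ⟨bc, hbc⟩ := BumpCovering.exists_isSubordinate isClosed_univ V hVopen hcover'
    set pou := bc.toPartitionOfUnity with hpou
    have hsub : pou.IsSubordinate V := hbc.toPartitionOfUnity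
    have hsumx : ∀ x : B, ∑ i, (pou i) x = 1 := by
      intro x
      rw [← finsum_eq_sum_of_fintype]
      exact pou.sum_eq_one (mem_univ x)
    have hfdecomp : f = ∑ i, (pou i : C(B, ℝ)) * f := by
      ext x
      simp only [ContinuousMap.sum_apply, ContinuousMap.mul_apply]
      rw [← Finset.sum_mul, hsumx x, one_mul]
    have hterm : ∀ i : Fin (m + 1),
        Λ ((pou i : C(B, ℝ)) * f) ≤
          ((i.val : ℝ) * ε + ε) * ((μ (E i)).toReal + ε / (m + 1)) := by
      intro i
      have hcoef : (0 : ℝ) ≤ (i.val : ℝ) * ε + ε := by positivity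
      have stepa : Λ ((pou i : C(B, ℝ)) * f) ≤
          Λ (((i.val : ℝ) * ε + ε) • (pou i : C(B, ℝ))) := by
        refine rmk_mono Λ hpos fun x => ?_
        simp only [ContinuousMap.mul_apply, ContinuousMap.smul_apply, smul_eq_mul]
        by_cases hx : x ∈ tsupport (pou i : C(B, ℝ))
        · have hxV : x ∈ V i := hsub i hx
          have hfx : f x < (i.val : ℝ) * ε + ε := hxV.2
          have h0 : (0 : ℝ) ≤ (pou i) x := pou.nonneg i x
          nlinarith
        · have : ((pou i : C(B, ℝ)) : B → ℝ) x = 0 := image_eq_zero_of_notMem_tsupport hx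
          simp only [this, mul_zero, zero_mul, le_refl]
      have stepb : Λ (((i.val : ℝ) * ε + ε) • (pou i : C(B, ℝ)))
          = ((i.val : ℝ) * ε + ε) * Λ (pou i : C(B, ℝ)) := by
        rw [Λ.map_smul, smul_eq_mul]
      have stepc : Λ (pou i : C(B, ℝ)) ≤ (μ (V i)).toReal :=
        rmk_le_measure Λ hpos hone (hVopen i) (pou.nonneg i) (pou.le_one i) (hsub i)
      have stepd : (μ (V i)).toReal ≤ (μ (E i)).toReal + ε / (m + 1) := by
        have h1 := ENNReal.toReal_mono
          (ENNReal.add_ne_top.mpr ⟨measure_ne_top μ _, ENNReal.ofReal_ne_top⟩) (hVle i)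
        rwa [ENNReal.toReal_add (measure_ne_top μ _) ENNReal.ofReal_ne_top,
          ENNReal.toReal_ofReal hδpos.le] at h1
      calc Λ ((pou i : C(B, ℝ)) * f) ≤ ((i.val : ℝ) * ε + ε) * Λ (pou i : C(B, ℝ)) := by
            rw [← stepb]; exact stepa
        _ ≤ ((i.val : ℝ) * ε + ε) * ((μ (E i)).toReal + ε / (m + 1)) :=
            mul_le_mul_of_nonneg_left (le_trans stepc stepd) hcoef
    have hsum1 : Λ f ≤ ∑ i : Fin (m + 1), ((i.val : ℝ) * ε + ε) * ((μ (E i)).toReal + ε / (m + 1)) := by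
      calc Λ f = Λ (∑ i, (pou i : C(B, ℝ)) * f) := by rw [← hfdecomp]
        _ = ∑ i, Λ ((pou i : C(B, ℝ)) * f) := map_sum Λ _ _
        _ ≤ _ := Finset.sum_le_sum fun i _ => hterm i
    -- split the sum
    have hsplit : ∑ i : Fin (m + 1), ((i.val : ℝ) * ε + ε) * ((μ (E i)).toReal + ε / (m + 1))
        = (∑ i : Fin (m + 1), ((i.val : ℝ) * ε + ε) * (μ (E i)).toReal)
          + ∑ i : Fin (m + 1), ((i.val : ℝ) * ε + ε) * (ε / (m + 1)) := by
      rw [← Finset.sum_add_distrib]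
      congr 1; ext i; ring
    -- second sum bound
    have hmε : (m : ℝ) * ε ≤ M + ε := by
      have h1 : ((m : ℕ) : ℝ) < M / ε + 1 := Nat.ceil_lt_add_one (by positivity)
      have h2 : ((m : ℕ) : ℝ) * ε < (M / ε + 1) * ε := mul_lt_mul_of_pos_right h1 hε
      have h3 : (M / ε + 1) * ε = M + ε := by field_simp
      linarith
    have hsum2 : ∑ i : Fin (m + 1), ((i.val : ℝ) * ε + ε) * (ε / (m + 1))
        ≤ (M + 2 * ε) * ε := by
      have hbound : ∀ i : Fin (m + 1), ((i.val : ℝ) * ε + ε) * (ε / (m + 1))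
          ≤ ((m : ℝ) * ε + ε) * (ε / (m + 1)) := by
        intro i
        have : (i.val : ℝ) ≤ (m : ℝ) := by exact_mod_cast Fin.is_le i
        have h5 : (i.val : ℝ) * ε ≤ (m : ℝ) * ε := mul_le_mul_of_nonneg_right this hε.le
        apply mul_le_mul_of_nonneg_right (by linarith) hδpos.le
      calc ∑ i : Fin (m + 1), ((i.val : ℝ) * ε + ε) * (ε / (m + 1))
          ≤ ∑ _i : Fin (m + 1), ((m : ℝ) * ε + ε) * (ε / (m + 1)) :=
            Finset.sum_le_sum fun i _ => hbound i
        _ = (m + 1) * (((m : ℝ) * ε + ε) * (ε / (m + 1))) := by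
            rw [Finset.sum_const, Finset.card_univ, Fintype.card_fin, nsmul_eq_mul]
            push_cast
            ring
        _ = ((m : ℝ) * ε + ε) * ε := by
            have : ((m : ℝ) + 1) ≠ 0 := by positivity
            field_simp
        _ ≤ (M + 2 * ε) * ε := by nlinarith
    -- first sum bound
    have hsum3 : ∑ i : Fin (m + 1), ((i.val : ℝ) * ε + ε) * (μ (E i)).toReal
        ≤ (∫ x, f x ∂μ) + 2 * ε := by
      have hIOn : ∀ i, IntegrableOn (fun x => f x + 2 * ε) (E i) μ :=
        fun i => (hint.add (integrable_const _)).integrableOn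
      have hterm2 : ∀ i : Fin (m + 1), ((i.val : ℝ) * ε + ε) * (μ (E i)).toReal
          ≤ ∫ x in E i, (f x + 2 * ε) ∂μ := by
        intro i
        have hconst : ∫ x in E i, (((i.val : ℝ)) * ε + ε) ∂μ
            = (μ (E i)).toReal * ((i.val : ℝ) * ε + ε) := by
          rw [setIntegral_const, smul_eq_mul]; rfl
        rw [mul_comm, ← hconst]
        refine setIntegral_mono_on
          (integrableOn_const (measure_lt_top μ _).ne) (hIOn i) (hEmeas i) ?_
        intro x hx
        have : (i.val : ℝ) * ε - ε < f x := hx.1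
        linarith
      have hsum4 : ∑ i : Fin (m + 1), ∫ x in E i, (f x + 2 * ε) ∂μ
          = (∫ x, f x ∂μ) + 2 * ε := by
        rw [← integral_iUnion_fintype hEmeas hEdis hIOn, hEcover, setIntegral_univ,
          integral_add hint (integrable_const _), integral_const]
        simp [measure_univ]
      calc ∑ i : Fin (m + 1), ((i.val : ℝ) * ε + ε) * (μ (E i)).toReal
          ≤ ∑ i : Fin (m + 1), ∫ x in E i, (f x + 2 * ε) ∂μ :=
            Finset.sum_le_sum fun i _ => hterm2 i
        _ = (∫ x, f x ∂μ) + 2 * ε := hsum4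
    have := hsum1.trans (le_of_eq hsplit)
    have hfinal : Λ f ≤ (∫ x, f x ∂μ) + 2 * ε + (M + 2 * ε) * ε := by linarith
    nlinarith
  -- conclude
  by_contra hcon
  push_neg at hcon
  have hδpos : 0 < Λ f - ∫ x, f x ∂μ := sub_pos.mpr hcon
  set δ := Λ f - ∫ x, f x ∂μ with hδ
  have hM : (0 : ℝ) < ‖f‖ + 4 := by positivity
  set ε := min 1 (δ / (2 * (‖f‖ + 4))) with hεdef
  have hε0 : 0 < ε := lt_min one_pos (by positivity)
  have h1 := key ε hε0 (min_le_left _ _)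
  have h2 : ε * (‖f‖ + 4) ≤ δ / 2 := by
    calc ε * (‖f‖ + 4) ≤ (δ / (2 * (‖f‖ + 4))) * (‖f‖ + 4) :=
          mul_le_mul_of_nonneg_right (min_le_right _ _) hM.le
      _ = δ / 2 := by
          rw [div_mul_eq_mul_div, mul_comm 2 (‖f‖ + 4), ← div_div,
            mul_div_assoc, div_self hM.ne', mul_one]
  linarith

end RMK

section Main
open MeasureTheory Set
variable {n : ℕ} {X : Fin n → Type*} [∀ i, NormedAddCommGroup (X i)] [∀ i, NormedSpace ℝ (X i)]
  {Y : Type*} [NormedAddCommGroup Y] [NormedSpace ℝ Y]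

/-- The continuous function `φ ↦ |φ u - φ v| ^ p` on the form ball. -/
noncomputable def Gmap (p : ℝ) (hp0 : 0 ≤ p) (u v : (i : Fin n) → X i) :
    C(FormBall X, ℝ) :=
  ⟨fun φ => |φ.1 u - φ.1 v| ^ p,
    (((FormBall.continuous_eval u).sub (FormBall.continuous_eval v)).abs).rpow_const
      fun _ => Or.inr hp0⟩

lemma Gmap_nonneg (p : ℝ) (hp0 : 0 ≤ p) (u v : (i : Fin n) → X i) (φ : FormBall X) :
    0 ≤ Gmap p hp0 u v φ := Real.rpow_nonneg (abs_nonneg _) p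

/-- The basic function in the Pietsch separation argument. -/
noncomputable def pairFun (p c : ℝ) (hp0 : 0 ≤ p) (T : ContinuousMultilinearMap ℝ X Y)
    (u v : (i : Fin n) → X i) : C(FormBall X, ℝ) :=
  ‖T u - T v‖ ^ p • (1 : C(FormBall X, ℝ)) - c ^ p • Gmap p hp0 u v

lemma pairFun_apply (p c : ℝ) (hp0 : 0 ≤ p) (T : ContinuousMultilinearMap ℝ X Y)
    (u v : (i : Fin n) → X i) (φ : FormBall X) :
    pairFun p c hp0 T u v φ = ‖T u - T v‖ ^ p - c ^ p * |φ.1 u - φ.1 v| ^ p := by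
  simp [pairFun, Gmap, smul_eq_mul]

/-- Scaling the `0`-th coordinate by `t ^ (1/p)`. -/
noncomputable def pscale (hn : 0 < n) (p t : ℝ) (u : (i : Fin n) → X i) :
    (i : Fin n) → X i :=
  Function.update u ⟨0, hn⟩ ((t ^ (1 / p)) • u ⟨0, hn⟩)

lemma map_pscale (hn : 0 < n) (p t : ℝ) (T : ContinuousMultilinearMap ℝ X Y)
    (u : (i : Fin n) → X i) : T (pscale hn p t u) = (t ^ (1 / p)) • T u := by
  rw [pscale, T.map_update_smul, Function.update_eq_self]

lemma pairFun_smul (hn : 0 < n) {p : ℝ} (hp : 1 ≤ p) (c : ℝ)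
    (T : ContinuousMultilinearMap ℝ X Y) {t : ℝ} (ht : 0 ≤ t) (u v : (i : Fin n) → X i) :
    t • pairFun p c (zero_le_one.trans hp) T u v
      = pairFun p c (zero_le_one.trans hp) T (pscale hn p t u) (pscale hn p t v) := by
  have hp0 : (0:ℝ) < p := lt_of_lt_of_le zero_lt_one hp
  set s : ℝ := t ^ (1 / p) with hs
  have hs0 : 0 ≤ s := Real.rpow_nonneg ht _
  have hsp : s ^ p = t := by
    rw [hs, one_div, Real.rpow_inv_rpow ht hp0.ne']
  ext φ
  rw [ContinuousMap.smul_apply, smul_eq_mul, pairFun_apply, pairFun_apply,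
    map_pscale, map_pscale, map_pscale hn p t φ.1, map_pscale hn p t φ.1]
  have e1 : ‖s • T u - s • T v‖ ^ p = s ^ p * ‖T u - T v‖ ^ p := by
    rw [← smul_sub, norm_smul, Real.norm_eq_abs, abs_of_nonneg hs0,
      Real.mul_rpow hs0 (norm_nonneg _)]
  have e2 : |s • φ.1 u - s • φ.1 v| ^ p = s ^ p * |φ.1 u - φ.1 v| ^ p := by
    rw [smul_eq_mul, smul_eq_mul, ← mul_sub, abs_mul, abs_of_nonneg hs0,
      Real.mul_rpow hs0 (abs_nonneg _)]
  rw [e1, e2, hsp]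
  ring

/-- The set of "Pietsch" functions. -/
def pietschSet (p c : ℝ) (hp0 : 0 ≤ p) (T : ContinuousMultilinearMap ℝ X Y) :
    Set C(FormBall X, ℝ) :=
  {f | ∃ (k : ℕ) (u v : Fin k → ((i : Fin n) → X i)),
    f = ∑ i, pairFun p c hp0 T (u i) (v i)}

lemma zero_mem_pietschSet (p c : ℝ) (hp0 : 0 ≤ p) (T : ContinuousMultilinearMap ℝ X Y) :
    (0 : C(FormBall X, ℝ)) ∈ pietschSet p c hp0 T :=
  ⟨0, Fin.elim0, Fin.elim0, by simp⟩

lemma convex_pietschSet (hn : 0 < n) {p : ℝ} (hp : 1 ≤ p) (c : ℝ)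
    (T : ContinuousMultilinearMap ℝ X Y) :
    Convex ℝ (pietschSet p c (zero_le_one.trans hp) T) := by
  rintro f ⟨k, u, v, rfl⟩ g ⟨l, u', v', rfl⟩ a b ha hb hab
  refine ⟨k + l,
    Fin.append (fun i => pscale hn p a (u i)) (fun i => pscale hn p b (u' i)),
    Fin.append (fun i => pscale hn p a (v i)) (fun i => pscale hn p b (v' i)), ?_⟩
  rw [Fin.sum_univ_add]
  simp only [Fin.append_left, Fin.append_right]
  rw [Finset.smul_sum, Finset.smul_sum]
  congr 1
  · exact Finset.sum_congr rfl fun i _ => pairFun_smul hn hp c T ha (u i) (v i)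
  · exact Finset.sum_congr rfl fun i _ => pairFun_smul hn hp c T hb (u' i) (v' i)

/-- The positive cone. -/
def posSet (n : ℕ) (X : Fin n → Type*) [∀ i, NormedAddCommGroup (X i)]
    [∀ i, NormedSpace ℝ (X i)] : Set C(FormBall X, ℝ) :=
  {f | ∀ φ : FormBall X, 0 < f φ}

lemma convex_posSet : Convex ℝ (posSet n X) := by
  intro f hf g hg a b ha hb hab
  intro φ
  simp only [ContinuousMap.add_apply, ContinuousMap.smul_apply, smul_eq_mul]
  rcases eq_or_lt_of_le ha with ha' | ha'
  · have hb1 : b = 1 := by linarith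
    simp [← ha', hb1]
    exact hg φ
  · have h2 : 0 ≤ b * g φ := mul_nonneg hb (hg φ).le
    nlinarith [hf φ]

lemma isOpen_posSet : IsOpen (posSet n X) := by
  rw [Metric.isOpen_iff]
  intro f hf
  obtain ⟨φ₀, -, hφ₀⟩ := isCompact_univ.exists_isMinOn univ_nonempty
    (f.continuous.continuousOn (s := univ))
  refine ⟨f φ₀, hf φ₀, fun g hg => ?_⟩
  intro φ
  have h1 : |g φ - f φ| ≤ dist g f := by
    rw [← Real.dist_eq]
    exact ContinuousMap.dist_apply_le_dist φ
  have h2 : f φ₀ ≤ f φ := hφ₀ (mem_univ φ)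
  rw [Metric.mem_ball] at hg
  have := abs_le.mp h1
  linarith [this.1]

end Main

section Main2
open MeasureTheory Set
variable {n : ℕ} {X : Fin n → Type*} [∀ i, NormedAddCommGroup (X i)] [∀ i, NormedSpace ℝ (X i)]
  {Y : Type*} [NormedAddCommGroup Y] [NormedSpace ℝ Y]

lemma pietsch_bddAbove {p : ℝ} (hp : 1 ≤ p) (k : ℕ) (u v : Fin k → ((i : Fin n) → X i)) :
    BddAbove (Set.range fun φ : {φ : ContinuousMultilinearMap ℝ X ℝ // ‖φ‖ ≤ 1} =>
      (∑ i, |φ.1 (u i) - φ.1 (v i)| ^ p) ^ (1 / p)) := by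
  have hp0 : (0:ℝ) ≤ p := zero_le_one.trans hp
  refine ⟨(∑ i, ((∏ j, ‖u i j‖) + ∏ j, ‖v i j‖) ^ p) ^ (1 / p), ?_⟩
  rintro r ⟨φ, rfl⟩
  refine Real.rpow_le_rpow (Finset.sum_nonneg fun i _ => Real.rpow_nonneg (abs_nonneg _) _)
    (Finset.sum_le_sum fun i _ => ?_) (by positivity)
  refine Real.rpow_le_rpow (abs_nonneg _) ?_ hp0
  calc |φ.1 (u i) - φ.1 (v i)| ≤ |φ.1 (u i)| + |φ.1 (v i)| := by
        rw [sub_eq_add_neg]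
        exact (abs_add_le _ _).trans (by rw [abs_neg])
    _ ≤ (∏ j, ‖u i j‖) + ∏ j, ‖v i j‖ :=
        add_le_add (FormBall.abs_eval_le φ (u i)) (FormBall.abs_eval_le φ (v i))

lemma pietsch_disjoint {p c : ℝ} (hp : 1 ≤ p) (hc : 0 ≤ c)
    (T : ContinuousMultilinearMap ℝ X Y) (hT : LipschitzPSumming p c T) :
    Disjoint (posSet n X) (pietschSet p c (zero_le_one.trans hp) T) := by
  have hp0 : (0:ℝ) < p := lt_of_lt_of_le zero_lt_one hp
  rw [Set.disjoint_left]
  rintro f hfP ⟨k, u, v, rfl⟩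
  set h : FormBall X → ℝ := fun φ => ∑ i, |φ.1 (u i) - φ.1 (v i)| ^ p with hh
  have hcont : Continuous h := continuous_finset_sum _ fun i _ =>
    (((FormBall.continuous_eval (u i)).sub (FormBall.continuous_eval (v i))).abs).rpow_const
      fun _ => Or.inr hp0.le
  obtain ⟨φs, -, hmax⟩ := isCompact_univ.exists_isMaxOn univ_nonempty hcont.continuousOn
  have hT' := hT k u v
  set A := ∑ i, ‖T (u i) - T (v i)‖ ^ p with hA
  have hA0 : 0 ≤ A := Finset.sum_nonneg fun i _ => Real.rpow_nonneg (norm_nonneg _) _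
  have hh0 : 0 ≤ h φs := Finset.sum_nonneg fun i _ => Real.rpow_nonneg (abs_nonneg _) _
  have hS : (⨆ φ : {φ : ContinuousMultilinearMap ℝ X ℝ // ‖φ‖ ≤ 1},
      (∑ i, |φ.1 (u i) - φ.1 (v i)| ^ p) ^ (1 / p)) ≤ (h φs) ^ (1 / p) := by
    haveI : Nonempty {φ : ContinuousMultilinearMap ℝ X ℝ // ‖φ‖ ≤ 1} := ⟨⟨0, by simp⟩⟩
    refine ciSup_le fun φ => ?_
    refine Real.rpow_le_rpow (Finset.sum_nonneg fun i _ => Real.rpow_nonneg (abs_nonneg _) _)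
      ?_ (by positivity)
    exact hmax (mem_univ (φ : FormBall X))
  have hkey : A ≤ c ^ p * h φs := by
    have h1 : A ^ (1 / p) ≤ c * (h φs) ^ (1 / p) :=
      hT'.trans (mul_le_mul_of_nonneg_left hS hc)
    calc A = (A ^ (1 / p)) ^ p := by
          rw [one_div, Real.rpow_inv_rpow hA0 hp0.ne']
      _ ≤ (c * (h φs) ^ (1 / p)) ^ p :=
          Real.rpow_le_rpow (Real.rpow_nonneg hA0 _) h1 hp0.le
      _ = c ^ p * ((h φs) ^ (1 / p)) ^ p :=
          Real.mul_rpow hc (Real.rpow_nonneg hh0 _)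
      _ = c ^ p * h φs := by rw [one_div, Real.rpow_inv_rpow hh0 hp0.ne']
  have hval := hfP φs
  have hexp : (∑ i, pairFun p c (zero_le_one.trans hp) T (u i) (v i)) φs
      = A - c ^ p * h φs := by
    simp only [ContinuousMap.sum_apply, pairFun_apply, hA, hh,
      Finset.sum_sub_distrib, Finset.mul_sum]
  rw [hexp] at hval
  linarith

lemma pietsch_forward (hn : 0 < n) {p c : ℝ} (hp : 1 ≤ p) (hc : 0 ≤ c)
    (T : ContinuousMultilinearMap ℝ X Y) (hT : LipschitzPSumming p c T) :
    ∃ μ : Measure (FormBall X), IsProbabilityMeasure μ ∧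
      ∀ u v : (i : Fin n) → X i,
        ‖T u - T v‖ ≤ c * (∫ φ : FormBall X, |φ.1 u - φ.1 v| ^ p ∂μ) ^ (1 / p) := by
  have hp0 : (0:ℝ) < p := lt_of_lt_of_le zero_lt_one hp
  obtain ⟨L, r, hPlt, hQge⟩ := geometric_hahn_banach_open convex_posSet isOpen_posSet
    (convex_pietschSet hn hp c T) (pietsch_disjoint hp hc T hT)
  set Λ₀ : C(FormBall X, ℝ) →L[ℝ] ℝ := -L with hΛ₀
  set s : ℝ := -r with hsdef
  have hQ : ∀ q ∈ pietschSet p c (zero_le_one.trans hp) T, Λ₀ q ≤ s := by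
    intro q hq
    have := hQge q hq
    simp only [hΛ₀, hsdef, ContinuousLinearMap.neg_apply]
    linarith
  have hP : ∀ g ∈ posSet n X, s < Λ₀ g := by
    intro g hg
    have := hPlt g hg
    simp only [hΛ₀, hsdef, ContinuousLinearMap.neg_apply]
    linarith
  have hs0 : 0 ≤ s := by
    have := hQ 0 (zero_mem_pietschSet p c (zero_le_one.trans hp) T)
    simpa using this
  have honePos : 0 < Λ₀ 1 := by
    refine lt_of_le_of_lt hs0 (hP 1 fun φ => ?_)
    simp
  have hpos0 : ∀ f : C(FormBall X, ℝ), (∀ x, 0 ≤ f x) → 0 ≤ Λ₀ f := by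
    intro f hf
    by_contra hneg
    push_neg at hneg
    set t : ℝ := -(Λ₀ f) / (2 * Λ₀ 1) with htdef
    have ht : 0 < t := by
      apply div_pos (by linarith) (by linarith)
    have hmem : f + t • (1 : C(FormBall X, ℝ)) ∈ posSet n X := by
      intro φ
      simp only [ContinuousMap.add_apply, ContinuousMap.smul_apply, ContinuousMap.one_apply,
        smul_eq_mul, mul_one]
      have := hf φ
      linarith
    have h2 := hP _ hmem
    rw [map_add, Λ₀.map_smul, smul_eq_mul] at h2
    have h3 : t * Λ₀ 1 = -(Λ₀ f) / 2 := by
      rw [htdef]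
      field_simp
    rw [h3] at h2
    have : s < Λ₀ f / 2 := by linarith
    linarith
  have hpair : ∀ u v : (i : Fin n) → X i,
      Λ₀ (pairFun p c (zero_le_one.trans hp) T u v) ≤ 0 := by
    intro u v
    by_contra hneg
    push_neg at hneg
    set q := pairFun p c (zero_le_one.trans hp) T u v with hq
    set t : ℝ := (s + 1) / Λ₀ q with htdef
    have ht : 0 ≤ t := div_nonneg (by linarith) hneg.le
    have hmem : t • q ∈ pietschSet p c (zero_le_one.trans hp) T := by
      refine ⟨1, fun _ => pscale hn p t u, fun _ => pscale hn p t v, ?_⟩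
      rw [Fin.sum_univ_one, hq, pairFun_smul hn hp c T ht]
    have h2 := hQ _ hmem
    rw [Λ₀.map_smul, smul_eq_mul, htdef, div_mul_cancel₀ _ hneg.ne'] at h2
    linarith
  -- normalized functional
  set Λ : C(FormBall X, ℝ) →ₗ[ℝ] ℝ := (Λ₀ 1)⁻¹ • (Λ₀ : C(FormBall X, ℝ) →ₗ[ℝ] ℝ) with hΛdef
  have hΛapp : ∀ f, Λ f = (Λ₀ 1)⁻¹ * Λ₀ f := fun f => rfl
  have hpos : ∀ f : C(FormBall X, ℝ), (∀ x, 0 ≤ f x) → 0 ≤ Λ f := by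
    intro f hf
    rw [hΛapp]
    exact mul_nonneg (inv_nonneg.mpr honePos.le) (hpos0 f hf)
  have hone : Λ 1 = 1 := by
    rw [hΛapp]
    exact inv_mul_cancel₀ honePos.ne'
  refine ⟨rmkMeasure Λ hpos, ⟨rmkMeasure_univ Λ hpos hone⟩, ?_⟩
  intro u v
  haveI : IsProbabilityMeasure (rmkMeasure Λ hpos) := ⟨rmkMeasure_univ Λ hpos hone⟩
  set G := Gmap (X := X) p (zero_le_one.trans hp) u v with hG
  have h1 : Λ₀ (pairFun p c (zero_le_one.trans hp) T u v) ≤ 0 := hpair u v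
  have h2 : ‖T u - T v‖ ^ p * Λ₀ 1 - c ^ p * Λ₀ G ≤ 0 := by
    rw [pairFun, map_sub, Λ₀.map_smul, Λ₀.map_smul, smul_eq_mul, smul_eq_mul] at h1
    linarith
  have h3 : ‖T u - T v‖ ^ p ≤ c ^ p * Λ G := by
    rw [hΛapp]
    rw [show c ^ p * ((Λ₀ 1)⁻¹ * Λ₀ G) = (c ^ p * Λ₀ G) / Λ₀ 1 by
      rw [div_eq_mul_inv]; ring]
    rw [le_div_iff₀ honePos]
    linarith
  have h4 : Λ G ≤ ∫ φ, G φ ∂(rmkMeasure Λ hpos) :=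
    rmk_le_integral Λ hpos hone G (Gmap_nonneg p (zero_le_one.trans hp) u v)
  have h5 : ‖T u - T v‖ ^ p ≤ c ^ p * ∫ φ, G φ ∂(rmkMeasure Λ hpos) :=
    h3.trans (mul_le_mul_of_nonneg_left h4 (Real.rpow_nonneg hc p))
  have hint0 : 0 ≤ ∫ φ, G φ ∂(rmkMeasure Λ hpos) :=
    integral_nonneg fun φ => Gmap_nonneg p (zero_le_one.trans hp) u v φ
  have h6 : ‖T u - T v‖ ≤ c * (∫ φ, G φ ∂(rmkMeasure Λ hpos)) ^ (1 / p) := by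
    calc ‖T u - T v‖ = (‖T u - T v‖ ^ p) ^ (1 / p) := by
          rw [one_div, Real.rpow_rpow_inv (norm_nonneg _) hp0.ne']
      _ ≤ (c ^ p * ∫ φ, G φ ∂(rmkMeasure Λ hpos)) ^ (1 / p) :=
          Real.rpow_le_rpow (Real.rpow_nonneg (norm_nonneg _) p) h5 (by positivity)
      _ = c * (∫ φ, G φ ∂(rmkMeasure Λ hpos)) ^ (1 / p) := by
          rw [Real.mul_rpow (Real.rpow_nonneg hc p) hint0, one_div,
            Real.rpow_rpow_inv hc hp0.ne']
  exact h6

lemma pietsch_backward {p c : ℝ} (hp : 1 ≤ p) (hc : 0 ≤ c)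
    (T : ContinuousMultilinearMap ℝ X Y) (μ : Measure (FormBall X))
    [IsProbabilityMeasure μ]
    (hdom : ∀ u v : (i : Fin n) → X i,
      ‖T u - T v‖ ≤ c * (∫ φ : FormBall X, |φ.1 u - φ.1 v| ^ p ∂μ) ^ (1 / p)) :
    LipschitzPSumming p c T := by
  have hp0 : (0:ℝ) < p := lt_of_lt_of_le zero_lt_one hp
  intro k u v
  set S := ⨆ φ : {φ : ContinuousMultilinearMap ℝ X ℝ // ‖φ‖ ≤ 1},
    (∑ i, |φ.1 (u i) - φ.1 (v i)| ^ p) ^ (1 / p) with hSdef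
  have hbdd := pietsch_bddAbove hp k u v
  have hS0 : 0 ≤ S := by
    have h0 : ((∑ i, |((0 : ContinuousMultilinearMap ℝ X ℝ)) (u i)
        - ((0 : ContinuousMultilinearMap ℝ X ℝ)) (v i)| ^ p) ^ (1 / p) : ℝ) = 0 := by
      simp [Real.zero_rpow hp0.ne', one_div, Real.zero_rpow (inv_ne_zero hp0.ne')]
    have := le_ciSup hbdd (⟨0, by simp⟩ : {φ : ContinuousMultilinearMap ℝ X ℝ // ‖φ‖ ≤ 1})
    rw [h0] at this
    exact this
  have hGint : ∀ i : Fin k,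
      Integrable (fun φ : FormBall X => |φ.1 (u i) - φ.1 (v i)| ^ p) μ := by
    intro i
    have := BoundedContinuousFunction.integrable μ
      (BoundedContinuousFunction.mkOfCompact (Gmap p hp0.le (u i) (v i)))
    exact this
  have hA : ∀ i : Fin k, ‖T (u i) - T (v i)‖ ^ p
      ≤ c ^ p * ∫ φ : FormBall X, |φ.1 (u i) - φ.1 (v i)| ^ p ∂μ := by
    intro i
    have hint0 : 0 ≤ ∫ φ : FormBall X, |φ.1 (u i) - φ.1 (v i)| ^ p ∂μ :=
      integral_nonneg fun φ => Real.rpow_nonneg (abs_nonneg _) _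
    calc ‖T (u i) - T (v i)‖ ^ p
        ≤ (c * (∫ φ : FormBall X, |φ.1 (u i) - φ.1 (v i)| ^ p ∂μ) ^ (1 / p)) ^ p :=
          Real.rpow_le_rpow (norm_nonneg _) (hdom (u i) (v i)) hp0.le
      _ = c ^ p * ((∫ φ : FormBall X, |φ.1 (u i) - φ.1 (v i)| ^ p ∂μ) ^ (1 / p)) ^ p :=
          Real.mul_rpow hc (Real.rpow_nonneg hint0 _)
      _ = c ^ p * ∫ φ : FormBall X, |φ.1 (u i) - φ.1 (v i)| ^ p ∂μ := by
          rw [one_div, Real.rpow_inv_rpow hint0 hp0.ne']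
  have hsum : (∑ i, ‖T (u i) - T (v i)‖ ^ p)
      ≤ c ^ p * ∫ φ : FormBall X, (∑ i, |φ.1 (u i) - φ.1 (v i)| ^ p) ∂μ := by
    rw [integral_finset_sum _ fun i _ => hGint i, Finset.mul_sum]
    exact Finset.sum_le_sum fun i _ => hA i
  have hpointwise : ∀ φ : FormBall X, (∑ i, |φ.1 (u i) - φ.1 (v i)| ^ p) ≤ S ^ p := by
    intro φ
    have hφS : ((∑ i, |φ.1 (u i) - φ.1 (v i)| ^ p) ^ (1 / p) : ℝ) ≤ S := le_ciSup hbdd φ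
    have hsum0 : 0 ≤ ∑ i, |φ.1 (u i) - φ.1 (v i)| ^ p :=
      Finset.sum_nonneg fun i _ => Real.rpow_nonneg (abs_nonneg _) _
    calc (∑ i, |φ.1 (u i) - φ.1 (v i)| ^ p)
        = ((∑ i, |φ.1 (u i) - φ.1 (v i)| ^ p) ^ (1 / p)) ^ p := by
          rw [one_div, Real.rpow_inv_rpow hsum0 hp0.ne']
      _ ≤ S ^ p := Real.rpow_le_rpow (Real.rpow_nonneg hsum0 _) hφS hp0.le
  have hintS : (∫ φ : FormBall X, (∑ i, |φ.1 (u i) - φ.1 (v i)| ^ p) ∂μ) ≤ S ^ p := by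
    have h1 : (∫ φ : FormBall X, (∑ i, |φ.1 (u i) - φ.1 (v i)| ^ p) ∂μ)
        ≤ ∫ _φ : FormBall X, S ^ p ∂μ :=
      integral_mono (integrable_finset_sum _ fun i _ => hGint i) (integrable_const _)
        hpointwise
    rwa [integral_const, probReal_univ, one_smul] at h1
  have hfinal : (∑ i, ‖T (u i) - T (v i)‖ ^ p) ≤ c ^ p * S ^ p := by
    refine hsum.trans ?_
    exact mul_le_mul_of_nonneg_left hintS (Real.rpow_nonneg hc p)
  have hAnn : 0 ≤ ∑ i, ‖T (u i) - T (v i)‖ ^ p :=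
    Finset.sum_nonneg fun i _ => Real.rpow_nonneg (norm_nonneg _) _
  calc (∑ i, ‖T (u i) - T (v i)‖ ^ p) ^ (1 / p)
      ≤ (c ^ p * S ^ p) ^ (1 / p) := Real.rpow_le_rpow hAnn hfinal (by positivity)
    _ = ((c * S) ^ p) ^ (1 / p) := by rw [Real.mul_rpow hc hS0]
    _ = c * S := by rw [one_div, Real.rpow_rpow_inv (mul_nonneg hc hS0) hp0.ne']

end Main2

/-- Pietsch domination theorem: `T` is Lipschitz `p`-summing with constant `c` iff
there is a Borel probability measure `μ` on the weak-* unit ball of `n`-linear forms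
such that `‖T u − T v‖ ≤ c·(∫ |φ(u) − φ(v)|^p dμ(φ))^{1/p}` for all `u, v`. -/
theorem lipschitzPSumming_iff_domination {n : ℕ} {X : Fin n → Type*}
    [∀ i, NormedAddCommGroup (X i)] [∀ i, NormedSpace ℝ (X i)] [∀ i, CompleteSpace (X i)]
    {Y : Type*} [NormedAddCommGroup Y] [NormedSpace ℝ Y] [CompleteSpace Y]
    (p : ℝ) (hp : 1 ≤ p) (c : ℝ) (hc : 0 ≤ c) (T : ContinuousMultilinearMap ℝ X Y) :
    LipschitzPSumming p c T ↔
      ∃ μ : Measure (FormBall X), IsProbabilityMeasure μ ∧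
        ∀ u v : (i : Fin n) → X i,
          ‖T u - T v‖ ≤ c * (∫ φ : FormBall X, |φ.1 u - φ.1 v| ^ p ∂μ) ^ (1 / p) := by
  constructor
  · intro hT
    rcases Nat.eq_zero_or_pos n with hn | hn
    · haveI : IsEmpty (Fin n) := by rw [hn]; infer_instance
      refine ⟨Measure.dirac (Classical.arbitrary (FormBall X)), inferInstance, ?_⟩
      intro u v
      haveI : Unique ((i : Fin n) → X i) := Pi.uniqueOfIsEmpty X
      have huv : u = v := Subsingleton.elim u v
      rw [huv, sub_self, norm_zero]
      have hint0 : 0 ≤ ∫ φ : FormBall X, |φ.1 v - φ.1 v| ^ p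
          ∂(Measure.dirac (Classical.arbitrary (FormBall X))) :=
        integral_nonneg fun φ => Real.rpow_nonneg (abs_nonneg _) _
      exact mul_nonneg hc (Real.rpow_nonneg hint0 _)
    · exact pietsch_forward hn hp hc T hT
  · rintro ⟨μ, hμ, hdom⟩
    haveI := hμ
    exact pietsch_backward hp hc T μ hdom
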